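/- An ideal J ⊆ S is radical, Borel-fixed, and concentrated in positive degrees if and only if J = J_A for some antichain A of the poset P = [m]×[n], where J_A is generated by the monomials x_a y_b with (a,b) in the order ideal generated by A. -/

import Mathlib

open MvPolynomial

/-- The bigrading on `S = k[x_1,…,x_m,y_1,…,y_n]`: `deg x_i = (1,0)`, `deg y_j = (0,1)`. -/
def wdeg (m n : ℕ) : (Fin m ⊕ Fin n) → ℕ × ℕ :=
  Sum.elim (fun _ => ((1, 0) : ℕ × ℕ)) (fun _ => ((0, 1) : ℕ × ℕ))

/-- The automorphism of `S` induced by a pair of matrices. -/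
noncomputable def borelAut (k : Type*) [CommSemiring k] (m n : ℕ)
    (g : Matrix (Fin m) (Fin m) k) (h : Matrix (Fin n) (Fin n) k) :
    MvPolynomial (Fin m ⊕ Fin n) k →ₐ[k] MvPolynomial (Fin m ⊕ Fin n) k :=
  aeval (Sum.elim
    (fun i => ∑ j, g j i • X (Sum.inl j))
    (fun i => ∑ j, h j i • X (Sum.inr j)))

/-- Borel-fixed: fixed by all automorphisms induced by invertible upper triangular matrices. -/
def BorelFixed {k : Type*} [CommSemiring k] {m n : ℕ}
    (J : Ideal (MvPolynomial (Fin m ⊕ Fin n) k)) : Prop :=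
  ∀ (g : Matrix (Fin m) (Fin m) k) (h : Matrix (Fin n) (Fin n) k),
    IsUnit g → IsUnit h →
    (∀ r c : Fin m, c < r → g r c = 0) →
    (∀ r c : Fin n, c < r → h r c = 0) →
    J.map (borelAut k m n g h) = J

namespace Stmt2Aux

variable {k : Type*} [Field k] {m n : ℕ}


open Finset


/-- exponent of the monomial x_{v.1} y_{v.2} -/
noncomputable def mexp {m n : ℕ} (v : Fin m × Fin n) : (Fin m ⊕ Fin n) →₀ ℕ :=
  Finsupp.single (Sum.inl v.1) 1 + Finsupp.single (Sum.inr v.2) 1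

lemma mexp_apply_inl {m n : ℕ} (v : Fin m × Fin n) (a : Fin m) :
    mexp v (Sum.inl a) = if v.1 = a then 1 else 0 := by
  simp [mexp, Finsupp.single_apply]

lemma mexp_apply_inr {m n : ℕ} (v : Fin m × Fin n) (b : Fin n) :
    mexp v (Sum.inr b) = if v.2 = b then 1 else 0 := by
  simp [mexp, Finsupp.single_apply]

lemma X_mul_X_eq (v : Fin m × Fin n) :
    (X (Sum.inl v.1) * X (Sum.inr v.2) : MvPolynomial (Fin m ⊕ Fin n) k)
      = monomial (mexp v) 1 := by
  rw [X, X, monomial_mul, mul_one, mexp]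

lemma mexp_le_iff (v : Fin m × Fin n) (e : (Fin m ⊕ Fin n) →₀ ℕ) :
    mexp v ≤ e ↔ (e (Sum.inl v.1) ≠ 0 ∧ e (Sum.inr v.2) ≠ 0) := by
  constructor
  · intro h
    rw [Finsupp.le_def] at h
    have h1 := h (Sum.inl v.1)
    have h2 := h (Sum.inr v.2)
    rw [mexp_apply_inl] at h1
    rw [mexp_apply_inr] at h2
    simp only [if_pos rfl] at h1 h2
    exact ⟨Nat.one_le_iff_ne_zero.mp h1, Nat.one_le_iff_ne_zero.mp h2⟩
  · intro ⟨h1, h2⟩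
    rw [Finsupp.le_def]
    rintro (a | b)
    · rw [mexp_apply_inl]
      split_ifs with h
      · subst h; omega
      · exact Nat.zero_le _
    · rw [mexp_apply_inr]
      split_ifs with h
      · subst h; omega
      · exact Nat.zero_le _

/-- the generating set of J_O for O a set of pairs -/
def genSet (k : Type*) [Field k] {m n : ℕ} (O : Set (Fin m × Fin n)) :
    Set (MvPolynomial (Fin m ⊕ Fin n) k) :=
  {p | ∃ v : Fin m × Fin n, v ∈ O ∧ p = X (Sum.inl v.1) * X (Sum.inr v.2)}

lemma genSet_eq_monomial_image (O : Set (Fin m × Fin n)) :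
    genSet k O = (fun s => (monomial s (1:k))) '' (mexp '' O) := by
  ext p
  constructor
  · rintro ⟨v, hv, rfl⟩
    exact ⟨mexp v, ⟨v, hv, rfl⟩, (X_mul_X_eq v).symm⟩
  · rintro ⟨s, ⟨v, hv, rfl⟩, rfl⟩
    exact ⟨v, hv, (X_mul_X_eq v).symm⟩

/-- membership characterization of the monomial ideal J_O -/
lemma mem_JO_iff (O : Set (Fin m × Fin n)) (p : MvPolynomial (Fin m ⊕ Fin n) k) :
    p ∈ Ideal.span (genSet k O) ↔
      ∀ e ∈ p.support, ∃ v ∈ O, e (Sum.inl v.1) ≠ 0 ∧ e (Sum.inr v.2) ≠ 0 := by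
  rw [genSet_eq_monomial_image, mem_ideal_span_monomial_image]
  constructor
  · intro h e he
    obtain ⟨s, ⟨v, hv, rfl⟩, hle⟩ := h e he
    exact ⟨v, hv, (mexp_le_iff v e).mp hle⟩
  · intro h e he
    obtain ⟨v, hv, h1⟩ := h e he
    exact ⟨mexp v, ⟨v, hv, rfl⟩, (mexp_le_iff v e).mpr h1⟩



/-- kill the variables in S -/
noncomputable def killVars (k : Type*) [Field k] {m n : ℕ} (S : Finset (Fin m ⊕ Fin n)) :
    MvPolynomial (Fin m ⊕ Fin n) k →ₐ[k] MvPolynomial (Fin m ⊕ Fin n) k :=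
  aeval (fun i => if i ∈ S then 0 else X i)

lemma sub_killVars_mem (S : Finset (Fin m ⊕ Fin n)) (p : MvPolynomial (Fin m ⊕ Fin n) k) :
    p - killVars k S p ∈ Ideal.span (X '' (S : Set (Fin m ⊕ Fin n))) := by
  induction p using MvPolynomial.induction_on with
  | C a => simp [killVars]
  | add p q hp hq =>
      have : p + q - killVars k S (p + q) = (p - killVars k S p) + (q - killVars k S q) := by
        rw [map_add]; ring
      rw [this]; exact Ideal.add_mem _ hp hq
  | mul_X p i hp =>
      have : p * X i - killVars k S (p * X i)
          = (p - killVars k S p) * X i + killVars k S p * (X i - killVars k S (X i)) := by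
        rw [map_mul]; ring
      rw [this]
      refine Ideal.add_mem _ (Ideal.mul_mem_right _ _ hp) (Ideal.mul_mem_left _ _ ?_)
      by_cases hi : i ∈ S
      · have : killVars k S (X i) = 0 := by simp [killVars, hi]
        rw [this, sub_zero]
        exact Ideal.subset_span ⟨i, hi, rfl⟩
      · have : killVars k S (X i) = X i := by simp [killVars, hi]
        rw [this, sub_self]
        exact Ideal.zero_mem _

lemma mem_span_X_iff_killVars (S : Finset (Fin m ⊕ Fin n)) (p : MvPolynomial (Fin m ⊕ Fin n) k) :
    p ∈ Ideal.span (X '' (S : Set (Fin m ⊕ Fin n))) ↔ killVars k S p = 0 := by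
  constructor
  · intro hp
    have hle : Ideal.span (X '' (S : Set (Fin m ⊕ Fin n)))
        ≤ RingHom.ker (killVars k S).toRingHom := by
      rw [Ideal.span_le]
      rintro q ⟨i, hi, rfl⟩
      simp [RingHom.mem_ker, killVars, Finset.mem_coe.mp hi]
    exact hle hp
  · intro h
    have := sub_killVars_mem S p
    rwa [h, sub_zero] at this

/-- S is a vertex cover of O -/
def Cover (O : Set (Fin m × Fin n)) (S : Finset (Fin m ⊕ Fin n)) : Prop :=
  ∀ v ∈ O, Sum.inl v.1 ∈ S ∨ Sum.inr v.2 ∈ S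

lemma JO_le_cover {O : Set (Fin m × Fin n)} {S : Finset (Fin m ⊕ Fin n)} (h : Cover O S) :
    Ideal.span (genSet k O) ≤ Ideal.span (X '' (S : Set (Fin m ⊕ Fin n))) := by
  rw [Ideal.span_le]
  rintro q ⟨v, hv, rfl⟩
  rcases h v hv with h1 | h1
  · exact Ideal.mul_mem_right _ _ (Ideal.subset_span ⟨_, h1, rfl⟩)
  · exact Ideal.mul_mem_left _ _ (Ideal.subset_span ⟨_, h1, rfl⟩)

lemma mem_JO_of_forall_cover {O : Set (Fin m × Fin n)} {p : MvPolynomial (Fin m ⊕ Fin n) k}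
    (h : ∀ S : Finset (Fin m ⊕ Fin n), Cover O S →
      p ∈ Ideal.span (X '' (S : Set (Fin m ⊕ Fin n)))) :
    p ∈ Ideal.span (genSet k O) := by
  rw [mem_JO_iff]
  intro e he
  by_contra hc
  push_neg at hc
  have hcov : Cover O (Finset.univ.filter (fun i => e i = 0)) := by
    intro v hv
    by_cases h1 : e (Sum.inl v.1) = 0
    · left; simp only [Finset.mem_filter, Finset.mem_univ, true_and]
      exact h1
    · right; simp only [Finset.mem_filter, Finset.mem_univ, true_and]
      exact hc v hv h1
  have := (MvPolynomial.mem_ideal_span_X_image).mp (h _ hcov) e he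
  obtain ⟨i, hi, hne⟩ := this
  simp only [Finset.coe_filter, Set.mem_setOf_eq, Finset.mem_univ, true_and] at hi
  exact hne hi

lemma one_not_mem_JO (O : Set (Fin m × Fin n)) :
    (1 : MvPolynomial (Fin m ⊕ Fin n) k) ∉ Ideal.span (genSet k O) := by
  intro h
  rw [mem_JO_iff] at h
  have h0 : (0 : (Fin m ⊕ Fin n) →₀ ℕ) ∈ (1 : MvPolynomial (Fin m ⊕ Fin n) k).support := by
    rw [MvPolynomial.mem_support_iff]
    simp
  obtain ⟨v, _, h1, _⟩ := h 0 h0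
  simp at h1

lemma JO_isRadical (O : Set (Fin m × Fin n)) :
    (Ideal.span (genSet k O)).IsRadical := by
  intro p hp
  obtain ⟨N, hpN⟩ := hp
  rcases Nat.eq_zero_or_pos N with rfl | hN
  · rw [pow_zero] at hpN
    exact absurd hpN (one_not_mem_JO O)
  · apply mem_JO_of_forall_cover
    intro S hS
    have h1 : p ^ N ∈ Ideal.span (X '' (S : Set (Fin m ⊕ Fin n))) :=
      JO_le_cover hS hpN
    rw [mem_span_X_iff_killVars] at h1 ⊢
    rw [map_pow] at h1
    exact pow_eq_zero_iff hN.ne' |>.mp h1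




lemma weight_fst (e : (Fin m ⊕ Fin n) →₀ ℕ) {a : Fin m} (ha : e (Sum.inl a) ≠ 0) :
    (Finsupp.weight (wdeg m n) e).1 ≠ 0 := by
  classical
  rw [Finsupp.weight_apply, Finsupp.sum]
  have hmem : Sum.inl a ∈ e.support := Finsupp.mem_support_iff.mpr ha
  intro h0
  rw [Prod.fst_sum] at h0
  rw [Finset.sum_eq_zero_iff] at h0
  have := h0 _ hmem
  simp only [Prod.smul_fst, wdeg, Sum.elim_inl, smul_eq_mul, mul_one] at this
  exact ha this

lemma weight_snd (e : (Fin m ⊕ Fin n) →₀ ℕ) {b : Fin n} (hb : e (Sum.inr b) ≠ 0) :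
    (Finsupp.weight (wdeg m n) e).2 ≠ 0 := by
  classical
  rw [Finsupp.weight_apply, Finsupp.sum]
  have hmem : Sum.inr b ∈ e.support := Finsupp.mem_support_iff.mpr hb
  intro h0
  rw [Prod.snd_sum] at h0
  rw [Finset.sum_eq_zero_iff] at h0
  have := h0 _ hmem
  simp only [Prod.smul_snd, wdeg, Sum.elim_inr, smul_eq_mul, mul_one] at this
  exact hb this


lemma weight_fst_eq_zero (e : (Fin m ⊕ Fin n) →₀ ℕ) (h : ∀ a : Fin m, e (Sum.inl a) = 0) :
    (Finsupp.weight (wdeg m n) e).1 = 0 := by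
  classical
  rw [Finsupp.weight_apply, Finsupp.sum, Prod.fst_sum]
  apply Finset.sum_eq_zero
  rintro (a | b) _
  · simp [wdeg, h a]
  · simp [wdeg]

lemma weight_snd_eq_zero (e : (Fin m ⊕ Fin n) →₀ ℕ) (h : ∀ b : Fin n, e (Sum.inr b) = 0) :
    (Finsupp.weight (wdeg m n) e).2 = 0 := by
  classical
  rw [Finsupp.weight_apply, Finsupp.sum, Prod.snd_sum]
  apply Finset.sum_eq_zero
  rintro (a | b) _
  · simp [wdeg]
  · simp [wdeg, h b]



lemma borelAut_X_inl (g : Matrix (Fin m) (Fin m) k) (h : Matrix (Fin n) (Fin n) k) (i : Fin m) :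
    borelAut k m n g h (X (Sum.inl i)) = ∑ j, g j i • X (Sum.inl j) := by
  simp [borelAut]

lemma borelAut_X_inr (g : Matrix (Fin m) (Fin m) k) (h : Matrix (Fin n) (Fin n) k) (i : Fin n) :
    borelAut k m n g h (X (Sum.inr i)) = ∑ j, h j i • X (Sum.inr j) := by
  simp [borelAut]

lemma borelAut_comp (g g' : Matrix (Fin m) (Fin m) k) (h h' : Matrix (Fin n) (Fin n) k) :
    (borelAut k m n g h).comp (borelAut k m n g' h') = borelAut k m n (g * g') (h * h') := by
  apply MvPolynomial.algHom_ext
  rintro (i | i)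
  · rw [AlgHom.comp_apply, borelAut_X_inl, borelAut_X_inl, map_sum]
    simp only [map_smul, borelAut_X_inl]
    calc ∑ x, g' x i • ∑ j, g j x • X (Sum.inl j)
        = ∑ x, ∑ j, (g j x * g' x i) • (X (Sum.inl j) : MvPolynomial (Fin m ⊕ Fin n) k) := by
          refine Finset.sum_congr rfl fun x _ => ?_
          rw [Finset.smul_sum]
          refine Finset.sum_congr rfl fun j _ => ?_
          rw [smul_smul, mul_comm]
      _ = ∑ j, ∑ x, (g j x * g' x i) • (X (Sum.inl j) : MvPolynomial (Fin m ⊕ Fin n) k) :=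
          Finset.sum_comm
      _ = ∑ j, (g * g') j i • X (Sum.inl j) := by
          refine Finset.sum_congr rfl fun j _ => ?_
          rw [← Finset.sum_smul, Matrix.mul_apply]
  · rw [AlgHom.comp_apply, borelAut_X_inr, borelAut_X_inr, map_sum]
    simp only [map_smul, borelAut_X_inr]
    calc ∑ x, h' x i • ∑ j, h j x • X (Sum.inr j)
        = ∑ x, ∑ j, (h j x * h' x i) • (X (Sum.inr j) : MvPolynomial (Fin m ⊕ Fin n) k) := by
          refine Finset.sum_congr rfl fun x _ => ?_
          rw [Finset.smul_sum]
          refine Finset.sum_congr rfl fun j _ => ?_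
          rw [smul_smul, mul_comm]
      _ = ∑ j, ∑ x, (h j x * h' x i) • (X (Sum.inr j) : MvPolynomial (Fin m ⊕ Fin n) k) :=
          Finset.sum_comm
      _ = ∑ j, (h * h') j i • X (Sum.inr j) := by
          refine Finset.sum_congr rfl fun j _ => ?_
          rw [← Finset.sum_smul, Matrix.mul_apply]

lemma borelAut_one : borelAut k m n 1 1 = AlgHom.id k (MvPolynomial (Fin m ⊕ Fin n) k) := by
  apply MvPolynomial.algHom_ext
  rintro (i | i) <;>
    simp [borelAut_X_inl, borelAut_X_inr, Matrix.one_apply, ite_smul]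

lemma map_borelAut_one (J : Ideal (MvPolynomial (Fin m ⊕ Fin n) k)) :
    J.map (borelAut k m n 1 1) = J := by
  rw [borelAut_one]
  show Ideal.span _ = J
  have : ⇑(AlgHom.id k (MvPolynomial (Fin m ⊕ Fin n) k)) '' ↑J = (J : Set _) := by
    simp
  rw [this]
  exact Ideal.span_eq J





lemma map_comp_eq (φ φ' : MvPolynomial (Fin m ⊕ Fin n) k →ₐ[k] MvPolynomial (Fin m ⊕ Fin n) k)
    (J : Ideal (MvPolynomial (Fin m ⊕ Fin n) k)) :
    J.map (φ.comp φ') = (J.map φ').map φ := by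
  have h1 := Ideal.map_map (f := φ'.toRingHom) (g := φ.toRingHom) (I := J)
  exact h1.symm

lemma JO_map_le (O : Set (Fin m × Fin n))
    (hO : ∀ v w : Fin m × Fin n, v ≤ w → w ∈ O → v ∈ O)
    (g : Matrix (Fin m) (Fin m) k) (h : Matrix (Fin n) (Fin n) k)
    (hgu : ∀ r c : Fin m, c < r → g r c = 0) (hhu : ∀ r c : Fin n, c < r → h r c = 0) :
    (Ideal.span (genSet k O)).map (borelAut k m n g h) ≤ Ideal.span (genSet k O) := by
  rw [Ideal.map_span, Ideal.span_le]
  rintro q ⟨p, ⟨v, hv, rfl⟩, rfl⟩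
  rw [map_mul, borelAut_X_inl, borelAut_X_inr, Finset.sum_mul_sum]
  apply Ideal.sum_mem
  intro a _
  apply Ideal.sum_mem
  intro b _
  rw [smul_mul_smul_comm, MvPolynomial.smul_eq_C_mul]
  by_cases hab : a ≤ v.1 ∧ b ≤ v.2
  · apply Ideal.mul_mem_left
    exact Ideal.subset_span ⟨(a, b), hO (a, b) v ⟨hab.1, hab.2⟩ hv, rfl⟩
  · have hz : g a v.1 * h b v.2 = 0 := by
      rcases not_and_or.mp hab with h1 | h1
      · rw [hgu a v.1 (lt_of_not_ge h1), zero_mul]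
      · rw [hhu b v.2 (lt_of_not_ge h1), mul_zero]
    rw [hz, map_zero, zero_mul]
    exact Ideal.zero_mem _

lemma JO_borelFixed (O : Set (Fin m × Fin n))
    (hO : ∀ v w : Fin m × Fin n, v ≤ w → w ∈ O → v ∈ O) :
    BorelFixed (Ideal.span (genSet k O)) := by
  intro g h hg hh hgu hhu
  have hdetg : IsUnit g.det := (Matrix.isUnit_iff_isUnit_det g).mp hg
  have hdeth : IsUnit h.det := (Matrix.isUnit_iff_isUnit_det h).mp hh
  haveI := Matrix.invertibleOfIsUnitDet g hdetg
  haveI := Matrix.invertibleOfIsUnitDet h hdeth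
  have hginv : ∀ r c : Fin m, c < r → g⁻¹ r c = 0 := fun r c hlt =>
    Matrix.blockTriangular_inv_of_blockTriangular
      (b := id) (fun i j hij => hgu i j hij) hlt
  have hhinv : ∀ r c : Fin n, c < r → h⁻¹ r c = 0 := fun r c hlt =>
    Matrix.blockTriangular_inv_of_blockTriangular
      (b := id) (fun i j hij => hhu i j hij) hlt
  apply le_antisymm (JO_map_le O hO g h hgu hhu)
  calc Ideal.span (genSet k O)
      = (Ideal.span (genSet k O)).map (borelAut k m n 1 1) :=
        (map_borelAut_one _).symm
    _ = (Ideal.span (genSet k O)).map (borelAut k m n (g * g⁻¹) (h * h⁻¹)) := by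
        rw [Matrix.mul_nonsing_inv _ hdetg, Matrix.mul_nonsing_inv _ hdeth]
    _ = ((Ideal.span (genSet k O)).map (borelAut k m n g⁻¹ h⁻¹)).map (borelAut k m n g h) := by
        rw [← borelAut_comp, map_comp_eq]
    _ ≤ (Ideal.span (genSet k O)).map (borelAut k m n g h) :=
        Ideal.map_mono (JO_map_le O hO g⁻¹ h⁻¹ hginv hhinv)



/-- the part of p supported on exponents satisfying P -/
noncomputable def sieve (P : ((Fin m ⊕ Fin n) →₀ ℕ) → Prop) [DecidablePred P]
    (p : MvPolynomial (Fin m ⊕ Fin n) k) : MvPolynomial (Fin m ⊕ Fin n) k :=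
  ∑ e ∈ p.support.filter P, monomial e (coeff e p)

lemma coeff_sieve (P : ((Fin m ⊕ Fin n) →₀ ℕ) → Prop) [DecidablePred P]
    (p : MvPolynomial (Fin m ⊕ Fin n) k) (e : (Fin m ⊕ Fin n) →₀ ℕ) :
    coeff e (sieve P p) = if P e then coeff e p else 0 := by
  rw [sieve, MvPolynomial.coeff_sum]
  simp only [coeff_monomial]
  rw [Finset.sum_ite_eq' (p.support.filter P) e (fun e' => coeff e' p)]
  by_cases hP : P e
  · by_cases hs : e ∈ p.support
    · rw [if_pos (Finset.mem_filter.mpr ⟨hs, hP⟩), if_pos hP]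
    · rw [if_neg (fun hc => hs (Finset.mem_filter.mp hc).1), if_pos hP]
      exact (MvPolynomial.notMem_support_iff.mp hs).symm
  · rw [if_neg (fun hc => hP (Finset.mem_filter.mp hc).2), if_neg hP]

lemma vandermonde_extract [Infinite k] (J : Ideal (MvPolynomial (Fin m ⊕ Fin n) k))
    (r : ℕ) (c : Fin r → MvPolynomial (Fin m ⊕ Fin n) k)
    (hc : ∀ t : k, t ≠ 0 → ∑ d : Fin r, t ^ (d : ℕ) • c d ∈ J) :
    ∀ d, c d ∈ J := by
  intro d0
  have hinf : ({0}ᶜ : Set k).Infinite := (Set.finite_singleton 0).infinite_compl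
  set emb := hinf.natEmbedding with hemb
  set f : Fin r → k := fun j => (emb (j : ℕ) : k) with hf
  have hfne : ∀ j, f j ≠ 0 := fun j => (emb (j : ℕ)).2
  have hfinj : Function.Injective f := by
    intro a b hab
    have := emb.injective (Subtype.ext hab)
    exact Fin.val_injective this
  set W := Matrix.vandermonde f with hW
  have hdet : IsUnit W.det := by
    rw [isUnit_iff_ne_zero, Ne, Matrix.det_vandermonde_eq_zero_iff]
    rintro ⟨i, j, hij, hne⟩
    exact hne (hfinj hij)
  have hinv : W⁻¹ * W = 1 := Matrix.nonsing_inv_mul W hdet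
  have hu : ∀ j : Fin r, ∑ d : Fin r, W j d • c d ∈ J := by
    intro j
    have := hc (f j) (hfne j)
    simpa [hW, Matrix.vandermonde] using this
  have key : c d0 = ∑ j : Fin r, W⁻¹ d0 j • ∑ d : Fin r, W j d • c d := by
    calc c d0 = ∑ d : Fin r, ((1 : Matrix (Fin r) (Fin r) k) d0 d) • c d := by
          simp [Matrix.one_apply, ite_smul]
      _ = ∑ d : Fin r, ((W⁻¹ * W) d0 d) • c d := by rw [hinv]
      _ = ∑ d : Fin r, ∑ j : Fin r, (W⁻¹ d0 j * W j d) • c d := by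
          refine Finset.sum_congr rfl fun d _ => ?_
          rw [Matrix.mul_apply, Finset.sum_smul]
      _ = ∑ j : Fin r, ∑ d : Fin r, (W⁻¹ d0 j * W j d) • c d := Finset.sum_comm
      _ = ∑ j : Fin r, W⁻¹ d0 j • ∑ d : Fin r, W j d • c d := by
          refine Finset.sum_congr rfl fun j _ => ?_
          rw [Finset.smul_sum]
          exact Finset.sum_congr rfl fun d _ => (mul_smul _ _ _)
  rw [key]
  apply Ideal.sum_mem
  intro j _
  rw [MvPolynomial.smul_eq_C_mul]
  exact Ideal.mul_mem_left _ _ (hu j)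



lemma prod_smul_index {ι α β : Type*} [CommMonoid β] [CommMonoid α] [MulAction α β]
    [IsScalarTower α β β] [SMulCommClass α β β] (s : Finset ι) (b : ι → α) (f : ι → β) :
    ∏ i ∈ s, b i • f i = (∏ i ∈ s, b i) • ∏ i ∈ s, f i := by
  induction s using Finset.cons_induction_on with
  | empty => simp
  | cons _ _ hj ih => rw [Finset.prod_cons, Finset.prod_cons, Finset.prod_cons, ih, smul_mul_smul_comm]

/-- rescale variable i by t -/
noncomputable def scaleHom (i : Fin m ⊕ Fin n) (t : k) :
    MvPolynomial (Fin m ⊕ Fin n) k →ₐ[k] MvPolynomial (Fin m ⊕ Fin n) k :=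
  aeval (fun j => (Function.update (fun _ : Fin m ⊕ Fin n => (1:k)) i t j) • X j)

lemma scaleHom_monomial (i : Fin m ⊕ Fin n) (t : k) (e : (Fin m ⊕ Fin n) →₀ ℕ) (c : k) :
    scaleHom i t (monomial e c) = t ^ (e i) • monomial e c := by
  classical
  rw [scaleHom, aeval_monomial]
  set d : Fin m ⊕ Fin n → k := Function.update (fun _ => (1:k)) i t with hd
  have h1 : (e.prod fun j nj => (d j • X j : MvPolynomial (Fin m ⊕ Fin n) k) ^ nj)
      = (∏ j ∈ e.support, d j ^ e j) •
        ∏ j ∈ e.support, (X j : MvPolynomial (Fin m ⊕ Fin n) k) ^ e j := by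
    rw [Finsupp.prod]
    simp only [smul_pow]
    exact prod_smul_index _ _ _
  rw [h1, prod_X_pow_eq_monomial]
  have hprod : (∏ j ∈ e.support, d j ^ e j) = t ^ e i := by
    by_cases hi : i ∈ e.support
    · rw [Finset.prod_eq_single i]
      · rw [hd, Function.update_self]
      · intro j _ hne
        rw [hd, Function.update_of_ne hne, one_pow]
      · intro h; exact absurd hi h
    · have he0 : e i = 0 := Finsupp.notMem_support_iff.mp hi
      rw [he0, pow_zero]
      apply Finset.prod_eq_one
      intro j hj
      have hne : j ≠ i := fun hc => hi (hc ▸ hj)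
      rw [hd, Function.update_of_ne hne, one_pow]
  rw [hprod, algebraMap_eq, mul_smul_comm, C_mul_monomial, mul_one]


lemma sieve_def (P : ((Fin m ⊕ Fin n) →₀ ℕ) → Prop) [DecidablePred P]
    (p : MvPolynomial (Fin m ⊕ Fin n) k) :
    sieve P p = ∑ e ∈ p.support.filter P, monomial e (coeff e p) := rfl














lemma scaleHom_eq_borelAut (i : Fin m ⊕ Fin n) (t : k) :
    scaleHom i t = borelAut k m n
      (Matrix.diagonal fun a => Function.update (fun _ : Fin m ⊕ Fin n => (1:k)) i t (Sum.inl a))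
      (Matrix.diagonal fun b => Function.update (fun _ : Fin m ⊕ Fin n => (1:k)) i t (Sum.inr b)) := by
  apply MvPolynomial.algHom_ext
  rintro (a | a)
  · rw [borelAut_X_inl]
    rw [scaleHom, aeval_X]
    simp [Matrix.diagonal_apply, ite_smul]
  · rw [borelAut_X_inr]
    rw [scaleHom, aeval_X]
    simp [Matrix.diagonal_apply, ite_smul]

lemma scaleHom_mem (J : Ideal (MvPolynomial (Fin m ⊕ Fin n) k)) (hB : BorelFixed J)
    (i : Fin m ⊕ Fin n) (t : k) (ht : t ≠ 0)
    {p : MvPolynomial (Fin m ⊕ Fin n) k} (hp : p ∈ J) : scaleHom i t p ∈ J := by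
  rw [scaleHom_eq_borelAut]
  set d : Fin m ⊕ Fin n → k := Function.update (fun _ => (1:k)) i t with hd
  have hdne : ∀ j, d j ≠ 0 := by
    intro j
    rw [hd]
    by_cases hj : j = i
    · subst hj; rw [Function.update_self]; exact ht
    · rw [Function.update_of_ne hj]; exact one_ne_zero
  have hu1 : IsUnit (Matrix.diagonal fun a : Fin m => d (Sum.inl a)) := by
    rw [Matrix.isUnit_iff_isUnit_det, Matrix.det_diagonal, isUnit_iff_ne_zero]
    exact Finset.prod_ne_zero_iff.mpr fun a _ => hdne _
  have hu2 : IsUnit (Matrix.diagonal fun b : Fin n => d (Sum.inr b)) := by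
    rw [Matrix.isUnit_iff_isUnit_det, Matrix.det_diagonal, isUnit_iff_ne_zero]
    exact Finset.prod_ne_zero_iff.mpr fun a _ => hdne _
  have ht1 : ∀ r c : Fin m, c < r → (Matrix.diagonal fun a : Fin m => d (Sum.inl a)) r c = 0 :=
    fun r c hlt => Matrix.diagonal_apply_ne _ (ne_of_gt hlt)
  have ht2 : ∀ r c : Fin n, c < r → (Matrix.diagonal fun b : Fin n => d (Sum.inr b)) r c = 0 :=
    fun r c hlt => Matrix.diagonal_apply_ne _ (ne_of_gt hlt)
  rw [← hB _ _ hu1 hu2 ht1 ht2]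
  exact Ideal.mem_map_of_mem _ hp

lemma sieve_single_mem [Infinite k] (J : Ideal (MvPolynomial (Fin m ⊕ Fin n) k))
    (hB : BorelFixed J) {p : MvPolynomial (Fin m ⊕ Fin n) k} (hp : p ∈ J)
    (i : Fin m ⊕ Fin n) (d0 : ℕ) :
    sieve (fun e => e i = d0) p ∈ J := by
  classical
  set r := (p.support.sup fun e => e i) + 1 with hr
  have hbound : ∀ e ∈ p.support, e i < r := by
    intro e he
    have h := Finset.le_sup (f := fun e => e i) he
    omega
  by_cases hd0 : d0 < r
  · set c : Fin r → MvPolynomial (Fin m ⊕ Fin n) k :=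
      fun d => sieve (fun e => e i = (d:ℕ)) p with hc
    have hkey : ∀ t : k, t ≠ 0 → ∑ d : Fin r, t ^ (d:ℕ) • c d ∈ J := by
      intro t ht
      have heq : ∑ d : Fin r, t ^ (d:ℕ) • c d = scaleHom i t p := by
        have hrhs : scaleHom i t p = ∑ e ∈ p.support, t ^ (e i) • monomial e (coeff e p) := by
          conv_lhs => rw [as_sum p]
          rw [map_sum]
          exact Finset.sum_congr rfl fun e _ => scaleHom_monomial i t e (coeff e p)
        rw [hrhs]
        calc ∑ d : Fin r, t ^ (d:ℕ) • c d
            = ∑ d : Fin r, ∑ e ∈ p.support,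
                (if e i = (d:ℕ) then t ^ (e i) • monomial e (coeff e p) else 0) := by
              refine Finset.sum_congr rfl fun d _ => ?_
              show t ^ (d:ℕ) • sieve (fun e => e i = (d:ℕ)) p
                  = ∑ e ∈ p.support, (if e i = (d:ℕ) then t ^ (e i) • monomial e (coeff e p) else 0)
              rw [sieve_def, Finset.smul_sum, ← Finset.sum_filter]
              refine Finset.sum_congr rfl fun e he => ?_
              rw [(Finset.mem_filter.mp he).2]
          _ = ∑ e ∈ p.support, ∑ d : Fin r,
                (if e i = (d:ℕ) then t ^ (e i) • monomial e (coeff e p) else 0) :=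
              Finset.sum_comm
          _ = ∑ e ∈ p.support, t ^ (e i) • monomial e (coeff e p) := by
              refine Finset.sum_congr rfl fun e he => ?_
              rw [Finset.sum_eq_single (⟨e i, hbound e he⟩ : Fin r)]
              · rw [if_pos rfl]
              · intro d _ hne
                rw [if_neg]
                intro hc'
                exact hne (Fin.ext hc'.symm)
              · intro habs
                exact absurd (Finset.mem_univ _) habs
      rw [heq]
      exact scaleHom_mem J hB i t ht hp
    exact vandermonde_extract J r c hkey ⟨d0, hd0⟩
  · have hzero : sieve (fun e => e i = d0) p = 0 := by
      rw [sieve_def, Finset.sum_eq_zero]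
      intro e he
      rcases Finset.mem_filter.mp he with ⟨hes, hei⟩
      exact absurd (hei ▸ hbound e hes) hd0
    rw [hzero]
    exact Ideal.zero_mem J

lemma sieve_congr {P Q : ((Fin m ⊕ Fin n) →₀ ℕ) → Prop} [DecidablePred P] [DecidablePred Q]
    (h : ∀ e, P e ↔ Q e) (p : MvPolynomial (Fin m ⊕ Fin n) k) : sieve P p = sieve Q p := by
  apply MvPolynomial.ext
  intro e
  rw [coeff_sieve, coeff_sieve, if_congr (h e) rfl rfl]

lemma sieve_sieve (P Q : ((Fin m ⊕ Fin n) →₀ ℕ) → Prop) [DecidablePred P] [DecidablePred Q]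
    (p : MvPolynomial (Fin m ⊕ Fin n) k) :
    sieve P (sieve Q p) = sieve (fun e => P e ∧ Q e) p := by
  apply MvPolynomial.ext
  intro e
  rw [coeff_sieve, coeff_sieve, coeff_sieve]
  by_cases hP : P e <;> by_cases hQ : Q e <;> simp [hP, hQ]

lemma monomial_coeff_mem [Infinite k] (J : Ideal (MvPolynomial (Fin m ⊕ Fin n) k))
    (hB : BorelFixed J) {p : MvPolynomial (Fin m ⊕ Fin n) k} (hp : p ∈ J)
    (e₀ : (Fin m ⊕ Fin n) →₀ ℕ) : monomial e₀ (coeff e₀ p) ∈ J := by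
  classical
  have main : ∀ s : Finset (Fin m ⊕ Fin n), sieve (fun e => ∀ i ∈ s, e i = e₀ i) p ∈ J := by
    intro s
    induction s using Finset.induction_on with
    | empty =>
        have h0 : sieve (fun e => ∀ i ∈ (∅ : Finset (Fin m ⊕ Fin n)), e i = e₀ i) p = p := by
          rw [sieve_def, Finset.filter_true_of_mem (fun e _ => by simp)]
          exact (as_sum p).symm
        rwa [h0]
    | @insert i s hi ih =>
        have heq : sieve (fun e => ∀ j ∈ insert i s, e j = e₀ j) p
            = sieve (fun e => e i = e₀ i) (sieve (fun e => ∀ j ∈ s, e j = e₀ j) p) := by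
          rw [sieve_sieve]
          exact sieve_congr (fun e => by rw [Finset.forall_mem_insert]) p
        rw [heq]
        exact sieve_single_mem J hB ih i (e₀ i)
  have huniv := main Finset.univ
  have hfin : sieve (fun e => ∀ i ∈ Finset.univ, e i = e₀ i) p
      = monomial e₀ (coeff e₀ p) := by
    apply MvPolynomial.ext
    intro e
    rw [coeff_sieve, coeff_monomial]
    by_cases he : e₀ = e
    · subst he
      rw [if_pos (fun i _ => rfl), if_pos rfl]
    · rw [if_neg he, if_neg]
      intro hall
      exact he (DFunLike.ext e₀ e (fun i => (hall i (Finset.mem_univ i)).symm))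
  rwa [hfin] at huniv





/-- the key exchange step: replace the variable `i` by `i'` inside a squarefree
monomial of the radical ideal `J`. -/
lemma exchange_core (J : Ideal (MvPolynomial (Fin m ⊕ Fin n) k)) (hrad : J.IsRadical)
    {i i' : Fin m ⊕ Fin n}
    (φ : MvPolynomial (Fin m ⊕ Fin n) k →ₐ[k] MvPolynomial (Fin m ⊕ Fin n) k)
    (hmap : J.map φ ≤ J) (hXi : φ (X i) = X i + X i')
    (hXj : ∀ j, j ≠ i → φ (X j) = X j) {s : Finset (Fin m ⊕ Fin n)}
    (hs : ∏ j ∈ s, X j ∈ J) (hi : i ∈ s) :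
    (∏ j ∈ insert i' (s.erase i), X j : MvPolynomial (Fin m ⊕ Fin n) k) ∈ J := by
  have h1 : φ (∏ j ∈ s, X j) ∈ J := hmap (Ideal.mem_map_of_mem _ hs)
  have h2 : φ (∏ j ∈ s, X j) = (X i + X i') * ∏ j ∈ s.erase i, X j := by
    rw [map_prod, ← Finset.mul_prod_erase _ _ hi, hXi]
    congr 1
    refine Finset.prod_congr rfl fun j hj => ?_
    exact hXj j (Finset.mem_erase.mp hj).1
  have hsplit : (∏ j ∈ s, X j : MvPolynomial (Fin m ⊕ Fin n) k)
      = X i * ∏ j ∈ s.erase i, X j := (Finset.mul_prod_erase _ _ hi).symm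
  have h3 : (X i' * ∏ j ∈ s.erase i, X j : MvPolynomial (Fin m ⊕ Fin n) k) ∈ J := by
    have hsub := J.sub_mem h1 hs
    rw [h2, hsplit] at hsub
    have : ((X i + X i') : MvPolynomial (Fin m ⊕ Fin n) k) * ∏ j ∈ s.erase i, X j
        - X i * ∏ j ∈ s.erase i, X j = X i' * ∏ j ∈ s.erase i, X j := by ring
    rwa [this] at hsub
  by_cases hi' : i' ∈ s.erase i
  · rw [Finset.insert_eq_self.mpr hi']
    apply hrad
    refine ⟨2, ?_⟩
    have hsq : ((∏ j ∈ s.erase i, X j : MvPolynomial (Fin m ⊕ Fin n) k))^2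
        = (X i' * ∏ j ∈ s.erase i, X j) * ∏ j ∈ (s.erase i).erase i', X j := by
      rw [sq]
      nth_rewrite 1 [← Finset.mul_prod_erase _ _ hi']
      ring
    rw [hsq]
    exact J.mul_mem_right _ h3
  · rw [Finset.prod_insert hi']
    exact h3

lemma transvection_upper_inl {a' a : Fin m} (hlt : a' < a) :
    ∀ r c : Fin m, c < r → (Matrix.transvection a' a (1:k)) r c = 0 := by
  intro r c hcr
  rw [Matrix.transvection, Matrix.add_apply, Matrix.one_apply_ne (ne_of_gt hcr), zero_add]
  apply Matrix.single_apply_of_ne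
  rintro ⟨rfl, rfl⟩
  exact absurd hlt (not_lt.mpr hcr.le)

lemma borelAut_transvection_inl_X {a' a : Fin m} (hne : a' ≠ a) (c : Fin m) :
    borelAut k m n (Matrix.transvection a' a (1:k)) 1 (X (Sum.inl c))
      = X (Sum.inl c) + if c = a then X (Sum.inl a') else 0 := by
  rw [borelAut_X_inl]
  rw [Matrix.transvection]
  simp only [Matrix.add_apply, add_smul, Finset.sum_add_distrib]
  congr 1
  · simp [Matrix.one_apply, ite_smul]
  · simp only [Matrix.single, Matrix.of_apply, ite_smul, one_smul, zero_smul]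
    by_cases hc : c = a
    · subst hc
      rw [if_pos rfl]
      rw [Finset.sum_eq_single a']
      · simp
      · intro j _ hj
        rw [if_neg (fun hx => hj hx.1.symm)]
      · intro habs; exact absurd (Finset.mem_univ _) habs
    · rw [if_neg hc, Finset.sum_eq_zero]
      intro j _
      rw [if_neg (fun hx => hc hx.2.symm)]

lemma borelAut_one_right_X_inr (g : Matrix (Fin m) (Fin m) k) (b : Fin n) :
    borelAut k m n g 1 (X (Sum.inr b)) = X (Sum.inr b) := by
  rw [borelAut_X_inr]
  simp [Matrix.one_apply, ite_smul]

lemma exchange_inl (J : Ideal (MvPolynomial (Fin m ⊕ Fin n) k)) (hrad : J.IsRadical)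
    (hB : BorelFixed J) {a' a : Fin m} (hlt : a' < a) {s : Finset (Fin m ⊕ Fin n)}
    (hs : ∏ j ∈ s, X j ∈ J) (hi : Sum.inl a ∈ s) :
    (∏ j ∈ insert (Sum.inl a') (s.erase (Sum.inl a)), X j : MvPolynomial (Fin m ⊕ Fin n) k) ∈ J := by
  set g := Matrix.transvection a' a (1:k) with hg
  have hgu : IsUnit g := by
    rw [Matrix.isUnit_iff_isUnit_det, hg, Matrix.det_transvection_of_ne _ _ (ne_of_lt hlt)]
    exact isUnit_one
  have hmap : J.map (borelAut k m n g 1) = J :=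
    hB g 1 hgu isUnit_one (transvection_upper_inl hlt)
      (fun r c h => Matrix.one_apply_ne (ne_of_gt h))
  apply exchange_core J hrad (borelAut k m n g 1) (le_of_eq hmap) _ _ hs hi
  · rw [borelAut_transvection_inl_X (ne_of_lt hlt), if_pos rfl]
  · rintro (c | b) hj
    · rw [borelAut_transvection_inl_X (ne_of_lt hlt), if_neg, add_zero]
      exact fun hx => hj (by rw [hx])
    · exact borelAut_one_right_X_inr g b







lemma transvection_upper_inr {b' b : Fin n} (hlt : b' < b) :
    ∀ r c : Fin n, c < r → (Matrix.transvection b' b (1:k)) r c = 0 := by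
  intro r c hcr
  rw [Matrix.transvection, Matrix.add_apply, Matrix.one_apply_ne (ne_of_gt hcr), zero_add]
  apply Matrix.single_apply_of_ne
  rintro ⟨rfl, rfl⟩
  exact absurd hlt (not_lt.mpr hcr.le)

lemma borelAut_transvection_inr_X {b' b : Fin n} (hne : b' ≠ b) (c : Fin n) :
    borelAut k m n 1 (Matrix.transvection b' b (1:k)) (X (Sum.inr c))
      = X (Sum.inr c) + if c = b then X (Sum.inr b') else 0 := by
  rw [borelAut_X_inr]
  rw [Matrix.transvection]
  simp only [Matrix.add_apply, add_smul, Finset.sum_add_distrib]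
  congr 1
  · simp [Matrix.one_apply, ite_smul]
  · simp only [Matrix.single, Matrix.of_apply, ite_smul, one_smul, zero_smul]
    by_cases hc : c = b
    · subst hc
      rw [if_pos rfl]
      rw [Finset.sum_eq_single b']
      · simp
      · intro j _ hj
        rw [if_neg (fun hx => hj hx.1.symm)]
      · intro habs; exact absurd (Finset.mem_univ _) habs
    · rw [if_neg hc, Finset.sum_eq_zero]
      intro j _
      rw [if_neg (fun hx => hc hx.2.symm)]

lemma borelAut_one_left_X_inl (h : Matrix (Fin n) (Fin n) k) (a : Fin m) :
    borelAut k m n 1 h (X (Sum.inl a)) = X (Sum.inl a) := by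
  rw [borelAut_X_inl]
  simp [Matrix.one_apply, ite_smul]

lemma exchange_inr (J : Ideal (MvPolynomial (Fin m ⊕ Fin n) k)) (hrad : J.IsRadical)
    (hB : BorelFixed J) {b' b : Fin n} (hlt : b' < b) {s : Finset (Fin m ⊕ Fin n)}
    (hs : ∏ j ∈ s, X j ∈ J) (hi : Sum.inr b ∈ s) :
    (∏ j ∈ insert (Sum.inr b') (s.erase (Sum.inr b)), X j : MvPolynomial (Fin m ⊕ Fin n) k) ∈ J := by
  set h := Matrix.transvection b' b (1:k) with hh
  have hhu : IsUnit h := by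
    rw [Matrix.isUnit_iff_isUnit_det, hh, Matrix.det_transvection_of_ne _ _ (ne_of_lt hlt)]
    exact isUnit_one
  have hmap : J.map (borelAut k m n 1 h) = J :=
    hB 1 h isUnit_one hhu (fun r c hc => Matrix.one_apply_ne (ne_of_gt hc))
      (transvection_upper_inr hlt)
  apply exchange_core J hrad (borelAut k m n 1 h) (le_of_eq hmap) _ _ hs hi
  · rw [borelAut_transvection_inr_X (ne_of_lt hlt), if_pos rfl]
  · rintro (c | c) hj
    · exact borelAut_one_left_X_inl h c
    · rw [borelAut_transvection_inr_X (ne_of_lt hlt), if_neg, add_zero]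
      exact fun hx => hj (by rw [hx])


lemma prod_support_mem (J : Ideal (MvPolynomial (Fin m ⊕ Fin n) k)) (hrad : J.IsRadical)
    {e : (Fin m ⊕ Fin n) →₀ ℕ} (he : monomial e (1:k) ∈ J) :
    (∏ i ∈ e.support, X i : MvPolynomial (Fin m ⊕ Fin n) k) ∈ J := by
  set N := e.support.sup e with hN
  apply hrad
  refine ⟨N, ?_⟩
  have hpow : ((∏ i ∈ e.support, X i : MvPolynomial (Fin m ⊕ Fin n) k))^N
      = monomial e 1 * ∏ i ∈ e.support, (X i : MvPolynomial (Fin m ⊕ Fin n) k)^(N - e i) := by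
    rw [← prod_X_pow_eq_monomial, ← Finset.prod_mul_distrib, ← Finset.prod_pow]
    refine Finset.prod_congr rfl fun i hi => ?_
    rw [← pow_add]
    congr 1
    have : e i ≤ N := Finset.le_sup hi
    omega
  rw [hpow]
  exact Ideal.mul_mem_right _ _ he

lemma collapse_aux (J : Ideal (MvPolynomial (Fin m ⊕ Fin n) k)) (hrad : J.IsRadical)
    (hB : BorelFixed J) (N : ℕ) :
    ∀ s : Finset (Fin m ⊕ Fin n), s.card ≤ N →
    (∏ j ∈ s, X j : MvPolynomial (Fin m ⊕ Fin n) k) ∈ J →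
    ∀ (a : Fin m) (b : Fin n), Sum.inl a ∈ s → Sum.inr b ∈ s →
    (∀ c : Fin m, Sum.inl c ∈ s → a ≤ c) → (∀ c : Fin n, Sum.inr c ∈ s → b ≤ c) →
    (X (Sum.inl a) * X (Sum.inr b) : MvPolynomial (Fin m ⊕ Fin n) k) ∈ J := by
  induction N with
  | zero =>
      intro s hcard _ a b ha _ _ _
      rw [Nat.le_zero, Finset.card_eq_zero] at hcard
      subst hcard
      exact absurd ha (Finset.notMem_empty _)
  | succ N ih =>
      intro s hcard hs a b ha hb hmina hminb
      by_cases hex : ∃ i ∈ s, i ≠ Sum.inl a ∧ i ≠ Sum.inr b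
      · obtain ⟨i, his, hia, hib⟩ := hex
        rcases i with c | c
        · -- i = inl c, c ≠ a, a ≤ c so a < c
          have hac : a < c := lt_of_le_of_ne (hmina c his) (fun h => hia (by rw [h]))
          have hstep := exchange_inl J hrad hB hac hs his
          have hmem : Sum.inl a ∈ s.erase (Sum.inl c) :=
            Finset.mem_erase.mpr ⟨fun h => hia (by rw [← h]) , ha⟩
          rw [Finset.insert_eq_self.mpr hmem] at hstep
          refine ih (s.erase (Sum.inl c)) ?_ hstep a b hmem ?_ ?_ ?_
          · rw [Finset.card_erase_of_mem his]; omega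
          · exact Finset.mem_erase.mpr ⟨by simp, hb⟩
          · intro c' hc'; exact hmina c' (Finset.mem_of_mem_erase hc')
          · intro c' hc'; exact hminb c' (Finset.mem_of_mem_erase hc')
        · have hbc : b < c := lt_of_le_of_ne (hminb c his) (fun h => hib (by rw [h]))
          have hstep := exchange_inr J hrad hB hbc hs his
          have hmem : Sum.inr b ∈ s.erase (Sum.inr c) :=
            Finset.mem_erase.mpr ⟨fun h => hib (by rw [← h]), hb⟩
          rw [Finset.insert_eq_self.mpr hmem] at hstep
          refine ih (s.erase (Sum.inr c)) ?_ hstep a b ?_ hmem ?_ ?_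
          · rw [Finset.card_erase_of_mem his]; omega
          · exact Finset.mem_erase.mpr ⟨by simp, ha⟩
          · intro c' hc'; exact hmina c' (Finset.mem_of_mem_erase hc')
          · intro c' hc'; exact hminb c' (Finset.mem_of_mem_erase hc')
      · push_neg at hex
        have hseq : s = {Sum.inl a, Sum.inr b} := by
          apply Finset.Subset.antisymm
          · intro i hi
            rcases eq_or_ne i (Sum.inl a) with h | h
            · subst h; exact Finset.mem_insert_self _ _
            · have := hex i hi h
              rw [this]
              exact Finset.mem_insert_of_mem (Finset.mem_singleton_self _)
          · intro i hi
            rcases Finset.mem_insert.mp hi with h | h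
            · subst h; exact ha
            · rw [Finset.mem_singleton.mp h]; exact hb
        rw [hseq, Finset.prod_pair (by simp)] at hs
        exact hs


lemma erase_pair_left (a : Fin m) (b : Fin n) :
    ({Sum.inl a, Sum.inr b} : Finset (Fin m ⊕ Fin n)).erase (Sum.inl a) = {Sum.inr b} := by
  apply Finset.erase_insert
  simp

lemma pair_mem_of_le (J : Ideal (MvPolynomial (Fin m ⊕ Fin n) k)) (hrad : J.IsRadical)
    (hB : BorelFixed J) {a' a : Fin m} {b' b : Fin n}
    (h : (X (Sum.inl a) * X (Sum.inr b) : MvPolynomial (Fin m ⊕ Fin n) k) ∈ J)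
    (ha : a' ≤ a) (hb : b' ≤ b) :
    (X (Sum.inl a') * X (Sum.inr b') : MvPolynomial (Fin m ⊕ Fin n) k) ∈ J := by
  have hprod : ∀ (a0 : Fin m) (b0 : Fin n),
      (∏ j ∈ ({Sum.inl a0, Sum.inr b0} : Finset (Fin m ⊕ Fin n)), X j
        : MvPolynomial (Fin m ⊕ Fin n) k) = X (Sum.inl a0) * X (Sum.inr b0) :=
    fun a0 b0 => Finset.prod_pair (by simp)
  have step1 : (X (Sum.inl a') * X (Sum.inr b) : MvPolynomial (Fin m ⊕ Fin n) k) ∈ J := by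
    rcases eq_or_lt_of_le ha with rfl | hlt
    · exact h
    · have hs : (∏ j ∈ ({Sum.inl a, Sum.inr b} : Finset (Fin m ⊕ Fin n)), X j
          : MvPolynomial (Fin m ⊕ Fin n) k) ∈ J := by rw [hprod]; exact h
      have hstep := exchange_inl J hrad hB hlt hs (Finset.mem_insert_self _ _)
      rw [erase_pair_left] at hstep
      rw [← hprod a' b]
      exact hstep
  rcases eq_or_lt_of_le hb with rfl | hlt
  · exact step1
  · have hs : (∏ j ∈ ({Sum.inr b, Sum.inl a'} : Finset (Fin m ⊕ Fin n)), X j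
        : MvPolynomial (Fin m ⊕ Fin n) k) ∈ J := by
      rw [Finset.prod_pair (by simp), mul_comm]
      exact step1
    have hstep := exchange_inr J hrad hB hlt hs (Finset.mem_insert_self _ _)
    have herase : ({Sum.inr b, Sum.inl a'} : Finset (Fin m ⊕ Fin n)).erase (Sum.inr b)
        = {Sum.inl a'} := Finset.erase_insert (by simp)
    rw [herase, Finset.prod_pair (by simp), mul_comm] at hstep
    exact hstep

lemma JO_posdeg (O : Set (Fin m × Fin n)) :
    ∀ p ∈ Ideal.span (genSet k O), ∀ d : ℕ × ℕ,
      IsWeightedHomogeneous (wdeg m n) p d → (d.1 = 0 ∨ d.2 = 0) → p = 0 := by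
  intro p hp d hhom hd
  by_contra hne
  obtain ⟨e, he⟩ := MvPolynomial.support_nonempty.mpr hne
  obtain ⟨v, _, h1, h2⟩ := (mem_JO_iff O p).mp hp e he
  have hw : Finsupp.weight (wdeg m n) e = d := hhom (MvPolynomial.mem_support_iff.mp he)
  rcases hd with h | h
  · exact weight_fst e h1 (by rw [hw, h])
  · exact weight_snd e h2 (by rw [hw, h])

/-- The forward direction of the theorem. -/
lemma forward (J : Ideal (MvPolynomial (Fin m ⊕ Fin n) k)) [Infinite k]
    (hrad : J.IsRadical) (hB : BorelFixed J)
    (hpos : ∀ p ∈ J, ∀ d : ℕ × ℕ, IsWeightedHomogeneous (wdeg m n) p d →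
      (d.1 = 0 ∨ d.2 = 0) → p = 0) :
    ∃ A : Set (Fin m × Fin n), IsAntichain (· ≤ ·) A ∧
      J = Ideal.span (genSet k {v : Fin m × Fin n | ∃ w ∈ A, v ≤ w}) := by
  classical
  set D : Set (Fin m × Fin n) :=
    {v | (X (Sum.inl v.1) * X (Sum.inr v.2) : MvPolynomial (Fin m ⊕ Fin n) k) ∈ J} with hD
  have hDdc : ∀ v w : Fin m × Fin n, v ≤ w → w ∈ D → v ∈ D :=
    fun v w hvw hw => pair_mem_of_le J hrad hB hw hvw.1 hvw.2
  set A : Set (Fin m × Fin n) := {v ∈ D | ∀ u ∈ D, v ≤ u → v = u} with hA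
  have hOD : {v : Fin m × Fin n | ∃ w ∈ A, v ≤ w} = D := by
    ext v
    constructor
    · rintro ⟨w, hw, hvw⟩
      exact hDdc v w hvw hw.1
    · intro hv
      have hfin : ({u ∈ D | v ≤ u} : Set (Fin m × Fin n)).Finite := Set.toFinite _
      obtain ⟨w, hw, hmax⟩ : ∃ w ∈ ({u ∈ D | v ≤ u} : Set (Fin m × Fin n)),
          ∀ u ∈ ({u ∈ D | v ≤ u} : Set (Fin m × Fin n)), w ≤ u → w = u := by
        obtain ⟨w, hw⟩ := hfin.exists_maximal ⟨v, hv, le_refl v⟩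
        exact ⟨w, hw.1, fun u hu hwu => le_antisymm hwu (hw.2 hu hwu)⟩
      refine ⟨w, ⟨hw.1, ?_⟩, hw.2⟩
      intro u hu hwu
      exact hmax u ⟨hu, le_trans hw.2 hwu⟩ hwu
  refine ⟨A, ?_, ?_⟩
  · intro v hv w hw hne hle
    exact hne (hv.2 w hw.1 hle)
  · rw [show genSet k {v : Fin m × Fin n | ∃ w ∈ A, v ≤ w} = genSet k D by rw [genSet, genSet, hOD]]
    apply le_antisymm
    · intro p hp
      rw [mem_JO_iff]
      intro e he
      have hc : coeff e p ≠ 0 := MvPolynomial.mem_support_iff.mp he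
      have hm1 : (monomial e (1:k) : MvPolynomial (Fin m ⊕ Fin n) k) ∈ J := by
        have hm := monomial_coeff_mem J hB hp e
        have : (monomial e (1:k) : MvPolynomial (Fin m ⊕ Fin n) k)
            = C (coeff e p)⁻¹ * monomial e (coeff e p) := by
          rw [C_mul_monomial, inv_mul_cancel₀ hc]
        rw [this]
        exact Ideal.mul_mem_left _ _ hm
      -- e must involve both an x- and a y-variable
      have hx : ∃ a : Fin m, e (Sum.inl a) ≠ 0 := by
        by_contra hno
        push_neg at hno
        have hhom : IsWeightedHomogeneous (wdeg m n) (monomial e (1:k))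
            (Finsupp.weight (wdeg m n) e) := isWeightedHomogeneous_monomial _ _ _ rfl
        have := hpos _ hm1 _ hhom (Or.inl (weight_fst_eq_zero e hno))
        rw [MvPolynomial.monomial_eq_zero] at this
        exact one_ne_zero this
      have hy : ∃ b : Fin n, e (Sum.inr b) ≠ 0 := by
        by_contra hno
        push_neg at hno
        have hhom : IsWeightedHomogeneous (wdeg m n) (monomial e (1:k))
            (Finsupp.weight (wdeg m n) e) := isWeightedHomogeneous_monomial _ _ _ rfl
        have := hpos _ hm1 _ hhom (Or.inr (weight_snd_eq_zero e hno))
        rw [MvPolynomial.monomial_eq_zero] at this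
        exact one_ne_zero this
      set sX : Finset (Fin m) := Finset.univ.filter (fun a => e (Sum.inl a) ≠ 0) with hsX
      set sY : Finset (Fin n) := Finset.univ.filter (fun b => e (Sum.inr b) ≠ 0) with hsY
      have hsXne : sX.Nonempty := by
        obtain ⟨a, ha⟩ := hx
        exact ⟨a, Finset.mem_filter.mpr ⟨Finset.mem_univ _, ha⟩⟩
      have hsYne : sY.Nonempty := by
        obtain ⟨b, hb⟩ := hy
        exact ⟨b, Finset.mem_filter.mpr ⟨Finset.mem_univ _, hb⟩⟩
      set a0 := sX.min' hsXne with ha0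
      set b0 := sY.min' hsYne with hb0
      have ha0mem : e (Sum.inl a0) ≠ 0 := (Finset.mem_filter.mp (sX.min'_mem hsXne)).2
      have hb0mem : e (Sum.inr b0) ≠ 0 := (Finset.mem_filter.mp (sY.min'_mem hsYne)).2
      have hsq : (∏ i ∈ e.support, X i : MvPolynomial (Fin m ⊕ Fin n) k) ∈ J :=
        prod_support_mem J hrad hm1
      have hpair : (X (Sum.inl a0) * X (Sum.inr b0) : MvPolynomial (Fin m ⊕ Fin n) k) ∈ J := by
        apply collapse_aux J hrad hB e.support.card e.support le_rfl hsq a0 b0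
        · exact Finsupp.mem_support_iff.mpr ha0mem
        · exact Finsupp.mem_support_iff.mpr hb0mem
        · intro c hcmem
          apply Finset.min'_le
          exact Finset.mem_filter.mpr ⟨Finset.mem_univ _, Finsupp.mem_support_iff.mp hcmem⟩
        · intro c hcmem
          apply Finset.min'_le
          exact Finset.mem_filter.mpr ⟨Finset.mem_univ _, Finsupp.mem_support_iff.mp hcmem⟩
      exact ⟨(a0, b0), hpair, ha0mem, hb0mem⟩
    · rw [Ideal.span_le]
      rintro q ⟨v, hv, rfl⟩
      exact hv


end Stmt2Aux

/-- An ideal `J ⊆ S` is radical, Borel-fixed and concentrated in positive degrees if and only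
if `J = J_A` for some antichain `A` of `[m] × [n]`, where `J_A` is generated by the monomials
`x_a y_b` with `(a,b)` in the order ideal `O(A)` generated by `A`. -/
theorem stmt2 {k : Type*} [Field k] [IsAlgClosed k] {m n : ℕ}
    (J : Ideal (MvPolynomial (Fin m ⊕ Fin n) k)) :
    (J.IsRadical ∧ BorelFixed J ∧
      (∀ p ∈ J, ∀ d : ℕ × ℕ, IsWeightedHomogeneous (wdeg m n) p d →
        (d.1 = 0 ∨ d.2 = 0) → p = 0)) ↔
    (∃ A : Set (Fin m × Fin n), IsAntichain (· ≤ ·) A ∧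
      J = Ideal.span {p : MvPolynomial (Fin m ⊕ Fin n) k |
        ∃ v : Fin m × Fin n, (∃ w ∈ A, v ≤ w) ∧
          p = X (Sum.inl v.1) * X (Sum.inr v.2)}) := by
  constructor
  · rintro ⟨hrad, hB, hpos⟩
    obtain ⟨A, hanti, hJ⟩ := Stmt2Aux.forward J hrad hB hpos
    exact ⟨A, hanti, hJ⟩
  · rintro ⟨A, hanti, rfl⟩
    have hset : {p : MvPolynomial (Fin m ⊕ Fin n) k |
        ∃ v : Fin m × Fin n, (∃ w ∈ A, v ≤ w) ∧
          p = X (Sum.inl v.1) * X (Sum.inr v.2)}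
        = Stmt2Aux.genSet k {v : Fin m × Fin n | ∃ w ∈ A, v ≤ w} := rfl
    rw [hset]
    have hdc : ∀ v w : Fin m × Fin n, v ≤ w →
        w ∈ {v : Fin m × Fin n | ∃ w' ∈ A, v ≤ w'} →
        v ∈ {v : Fin m × Fin n | ∃ w' ∈ A, v ≤ w'} := by
      rintro v w hvw ⟨u, hu, hwu⟩
      exact ⟨u, hu, le_trans hvw hwu⟩
    exact ⟨Stmt2Aux.JO_isRadical _, Stmt2Aux.JO_borelFixed _ hdc,
      Stmt2Aux.JO_posdeg _⟩
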